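/- arXiv:1910.00880 — 6 statements merged into one kernel-verified Lean document; each statement's English description precedes it below -/
import Mathlib

section
/- For θ ∈ (0, π), the function w(cos θ) := 1/((cos(θ/3) - 1/2)√(1 + cos(θ/3))) + 1/((cos(θ/3) + 1/2)√(1 - cos(θ/3))) equals (1/(2√2))·(sec((θ-2π)/6)·sec((θ+2π)/6)·sec(θ/6) + sec((θ-π)/6)·sec((θ+π)/6)·csc(θ/6)). -/
open Real

noncomputable def w (x : ℝ) : ℝ :=
  1 / ((Real.cos (Real.arccos x / 3) - 1 / 2) * Real.sqrt (1 + Real.cos (Real.arccos x / 3))) +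
  1 / ((Real.cos (Real.arccos x / 3) + 1 / 2) * Real.sqrt (1 - Real.cos (Real.arccos x / 3)))

lemma aux_div (a b c : ℝ) : 1/(2*c) * (2/a * (1/b)) = 1/(a*(c*b)) := by
  rw [div_mul_div_comm, div_mul_div_comm,
    show (1:ℝ)*(2*1) = 2*1 by norm_num,
    show 2*c*(a*b) = 2*(a*(c*b)) by ring,
    mul_div_mul_left _ _ (two_ne_zero)]

set_option maxHeartbeats 1000000 in
theorem w_cos_eq_sec_csc (θ : ℝ) (hθ : θ ∈ Set.Ioo 0 π) :
    w (Real.cos θ) =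
      (1 / (2 * Real.sqrt 2)) *
        ((1 / Real.cos ((θ - 2 * π) / 6)) * (1 / Real.cos ((θ + 2 * π) / 6)) *
            (1 / Real.cos (θ / 6)) +
          (1 / Real.cos ((θ - π) / 6)) * (1 / Real.cos ((θ + π) / 6)) *
            (1 / Real.sin (θ / 6))) := by
  obtain ⟨h0, hπ⟩ := hθ
  have hπpos := Real.pi_pos
  have hc : 0 < Real.cos (θ/6) := Real.cos_pos_of_mem_Ioo ⟨by linarith, by linarith⟩
  have hs : 0 < Real.sin (θ/6) := Real.sin_pos_of_pos_of_lt_pi (by linarith) (by linarith)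
  have hA : 0 < Real.cos (θ/6 - π/3) := Real.cos_pos_of_mem_Ioo ⟨by linarith, by linarith⟩
  have hB : 0 < Real.cos (θ/6 + π/3) := Real.cos_pos_of_mem_Ioo ⟨by linarith, by linarith⟩
  have hD : 0 < Real.cos (θ/6 - π/6) := Real.cos_pos_of_mem_Ioo ⟨by linarith, by linarith⟩
  have hE : 0 < Real.cos (θ/6 + π/6) := Real.cos_pos_of_mem_Ioo ⟨by linarith, by linarith⟩
  have harccos : Real.arccos (Real.cos θ) = θ := Real.arccos_cos h0.le hπ.le
  have hX : 1/2 < Real.cos (θ/3) := by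
    have := Real.cos_lt_cos_of_nonneg_of_le_pi (by linarith : (0:ℝ) ≤ θ/3)
      (by linarith : π/3 ≤ π) (by linarith : θ/3 < π/3)
    rwa [Real.cos_pi_div_three] at this
  have h36 : θ/3 = 2*(θ/6) := by ring
  have hsq3 : Real.sqrt 3 ^ 2 = 3 := Real.sq_sqrt (by norm_num)
  have hsq2 : Real.sqrt 2 ^ 2 = 2 := Real.sq_sqrt (by norm_num)
  have h2pos : (0:ℝ) < Real.sqrt 2 := by positivity
  have hsqA : Real.sqrt (1 + Real.cos (θ/3)) = Real.sqrt 2 * Real.cos (θ/6) := by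
    rw [h36, Real.cos_two_mul,
      show 1 + (2 * Real.cos (θ/6)^2 - 1) = 2 * Real.cos (θ/6)^2 by ring,
      Real.sqrt_mul (by norm_num), Real.sqrt_sq hc.le]
  have hsqB : Real.sqrt (1 - Real.cos (θ/3)) = Real.sqrt 2 * Real.sin (θ/6) := by
    have h' : 1 - Real.cos (θ/3) = 2 * Real.sin (θ/6)^2 := by
      rw [h36, Real.cos_two_mul]; nlinarith [Real.sin_sq_add_cos_sq (θ/6)]
    rw [h', Real.sqrt_mul (by norm_num), Real.sqrt_sq hs.le]
  have key1 : Real.cos (θ/6 - π/3) * Real.cos (θ/6 + π/3) = (Real.cos (θ/3) - 1/2)/2 := by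
    rw [Real.cos_sub, Real.cos_add, h36, Real.cos_two_mul, Real.cos_pi_div_three,
      Real.sin_pi_div_three]
    nlinarith [Real.sin_sq_add_cos_sq (θ/6), hsq3]
  have key2 : Real.cos (θ/6 - π/6) * Real.cos (θ/6 + π/6) = (Real.cos (θ/3) + 1/2)/2 := by
    rw [Real.cos_sub, Real.cos_add, h36, Real.cos_two_mul, Real.cos_pi_div_six,
      Real.sin_pi_div_six]
    nlinarith [Real.sin_sq_add_cos_sq (θ/6), hsq3]
  have e1 : 1 / Real.cos (θ/6 - π/3) * (1 / Real.cos (θ/6 + π/3)) =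
      2 / (Real.cos (θ/3) - 1/2) := by
    rw [div_mul_div_comm, one_mul, key1, one_div_div]
  have e2 : 1 / Real.cos (θ/6 - π/6) * (1 / Real.cos (θ/6 + π/6)) =
      2 / (Real.cos (θ/3) + 1/2) := by
    rw [div_mul_div_comm, one_mul, key2, one_div_div]
  unfold w
  rw [harccos, hsqA, hsqB,
    show (θ - 2*π)/6 = θ/6 - π/3 by ring, show (θ + 2*π)/6 = θ/6 + π/3 by ring,
    show (θ - π)/6 = θ/6 - π/6 by ring, show (θ + π)/6 = θ/6 + π/6 by ring,
    e1, e2]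
  have n1 : Real.cos (θ/3) - 1/2 ≠ 0 := by linarith
  have n2 : Real.cos (θ/3) + 1/2 ≠ 0 := by linarith
  rw [mul_add]
  rw [aux_div, aux_div]
end

section
/- The function w defined on (-1,1) by w(x) = 1/((cos(arccos(x)/3) - 1/2)√(1 + cos(arccos(x)/3))) + 1/((cos(arccos(x)/3) + 1/2)√(1 - cos(arccos(x)/3))) is an even function: w(-x) = w(x) for all x ∈ (-1,1). -/
open Real

lemma w_step (c : ℝ) (hc : c ≠ 0) : 1 / (Real.sqrt 2 * c / 2) = Real.sqrt 2 / c := by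
  have h2 : Real.sqrt 2 * Real.sqrt 2 = 2 := Real.mul_self_sqrt (by norm_num)
  have hs : Real.sqrt 2 ≠ 0 := by positivity
  field_simp
  rw [sq, h2]

lemma w_key (φ : ℝ) (h0 : 0 < φ) (hπ : φ < π) :
    1 / ((Real.cos (φ / 3) - 1 / 2) * Real.sqrt (1 + Real.cos (φ / 3))) +
    1 / ((Real.cos (φ / 3) + 1 / 2) * Real.sqrt (1 - Real.cos (φ / 3)))
    = Real.sqrt 2 / Real.cos (φ / 2) + Real.sqrt 2 / Real.sin (φ / 2) := by
  set u := φ / 6 with hu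
  have hu0 : 0 < u := by positivity
  have hu6 : u < π / 6 := by rw [hu]; linarith
  have hcu : 0 < Real.cos u := Real.cos_pos_of_mem_Ioo ⟨by linarith [Real.pi_pos], by linarith [Real.pi_pos]⟩
  have hsu : 0 < Real.sin u := Real.sin_pos_of_pos_of_lt_pi hu0 (by linarith [Real.pi_pos])
  have h3u : φ / 2 = 3 * u := by rw [hu]; ring
  have h2u : φ / 3 = 2 * u := by rw [hu]; ring
  have hc3 : 0 < Real.cos (3 * u) := Real.cos_pos_of_mem_Ioo ⟨by linarith [Real.pi_pos], by linarith [Real.pi_pos]⟩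
  have hs3 : 0 < Real.sin (3 * u) := Real.sin_pos_of_pos_of_lt_pi (by linarith) (by linarith [Real.pi_pos])
  have hpyth := Real.sin_sq_add_cos_sq u
  have h1 : 1 + Real.cos (φ / 3) = 2 * Real.cos u ^ 2 := by
    rw [h2u, Real.cos_two_mul]; ring
  have h2 : 1 - Real.cos (φ / 3) = 2 * Real.sin u ^ 2 := by
    rw [h2u, Real.cos_two_mul]; nlinarith
  have hsq1 : Real.sqrt (1 + Real.cos (φ / 3)) = Real.sqrt 2 * Real.cos u := by
    rw [h1, show (2 : ℝ) * Real.cos u ^ 2 = (Real.sqrt 2 * Real.cos u) ^ 2 by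
      rw [mul_pow, Real.sq_sqrt (by norm_num)]]
    exact Real.sqrt_sq (by positivity)
  have hsq2 : Real.sqrt (1 - Real.cos (φ / 3)) = Real.sqrt 2 * Real.sin u := by
    rw [h2, show (2 : ℝ) * Real.sin u ^ 2 = (Real.sqrt 2 * Real.sin u) ^ 2 by
      rw [mul_pow, Real.sq_sqrt (by norm_num)]]
    exact Real.sqrt_sq (by positivity)
  have key1 : (Real.cos (φ / 3) - 1 / 2) * (Real.sqrt 2 * Real.cos u)
      = Real.sqrt 2 * Real.cos (3 * u) / 2 := by
    rw [h2u, Real.cos_two_mul, Real.cos_three_mul]; ring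
  have key2 : (Real.cos (φ / 3) + 1 / 2) * (Real.sqrt 2 * Real.sin u)
      = Real.sqrt 2 * Real.sin (3 * u) / 2 := by
    rw [h2u, Real.cos_two_mul, Real.sin_three_mul]
    linear_combination (2 * Real.sqrt 2 * Real.sin u) * Real.sin_sq_add_cos_sq u
  rw [hsq1, hsq2, key1, key2, h3u, w_step _ (ne_of_gt hc3), w_step _ (ne_of_gt hs3)]

theorem w_even (x : ℝ) (hx : x ∈ Set.Ioo (-1 : ℝ) 1) : w (-x) = w x := by
  obtain ⟨hx1, hx2⟩ := hx
  have h0 : 0 < Real.arccos x := Real.arccos_pos.mpr hx2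
  have h0' : 0 < Real.arccos (-x) := Real.arccos_pos.mpr (by linarith)
  have hneg : Real.arccos (-x) = π - Real.arccos x := Real.arccos_neg x
  have hπ : Real.arccos x < π := by linarith [hneg ▸ h0']
  have hπ' : Real.arccos (-x) < π := by rw [hneg]; linarith
  unfold w
  rw [w_key _ h0 hπ, w_key _ h0' hπ', hneg]
  rw [show (π - Real.arccos x) / 2 = π / 2 - Real.arccos x / 2 by ring,
    Real.cos_pi_div_two_sub, Real.sin_pi_div_two_sub]
  ring
end

section
/- For all θ ∈ (0, π) with θ ∉ {π/3, 2π/3}, one has w(cos(3θ)) = 1/(|cos θ - 1/2|·√(1 + cos θ)) + 1/(|cos θ + 1/2|·√(1 - cos θ)), where w is defined on (-1,1) by the formula w(x) = 1/((cos(arccos(x)/3) - 1/2)√(1 + cos(arccos(x)/3))) + 1/((cos(arccos(x)/3) + 1/2)√(1 - cos(arccos(x)/3))). -/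
open Real

lemma sqrt_one_add_cos (θ : ℝ) (h0 : 0 ≤ θ) (hπ : θ ≤ π) :
    Real.sqrt (1 + Real.cos θ) = Real.sqrt 2 * Real.cos (θ / 2) := by
  rw [Real.cos_half (by linarith) hπ, ← Real.sqrt_mul (by norm_num)]
  congr 1; field_simp

lemma sqrt_one_sub_cos (θ : ℝ) (h0 : 0 ≤ θ) (hπ : θ ≤ π) :
    Real.sqrt (1 - Real.cos θ) = Real.sqrt 2 * Real.sin (θ / 2) := by
  rw [Real.sin_half_eq_sqrt h0 (by linarith [Real.pi_pos]), ← Real.sqrt_mul (by norm_num)]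
  congr 1; field_simp

lemma denom_cos (θ : ℝ) (h0 : 0 ≤ θ) (hπ : θ ≤ π) :
    (Real.cos θ - 1 / 2) * Real.sqrt (1 + Real.cos θ)
      = (Real.sqrt 2 / 2) * Real.cos (3 * (θ / 2)) := by
  rw [sqrt_one_add_cos θ h0 hπ, Real.cos_three_mul,
    show θ = 2 * (θ / 2) by ring, Real.cos_two_mul]
  ring

lemma denom_sin (θ : ℝ) (h0 : 0 ≤ θ) (hπ : θ ≤ π) :
    (Real.cos θ + 1 / 2) * Real.sqrt (1 - Real.cos θ)
      = (Real.sqrt 2 / 2) * Real.sin (3 * (θ / 2)) := by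
  rw [sqrt_one_sub_cos θ h0 hπ, Real.sin_three_mul,
    show θ = 2 * (θ / 2) by ring, Real.cos_two_mul', Real.cos_sq']
  ring

lemma inv_half_sqrt_two_mul (c : ℝ) :
    1 / (Real.sqrt 2 / 2 * c) = Real.sqrt 2 * (1 / c) := by
  have h : (1:ℝ) / (Real.sqrt 2 / 2) = Real.sqrt 2 := by
    rw [one_div_div]; exact Real.div_sqrt
  rw [one_div, mul_inv, ← one_div, ← one_div, h]

lemma g_eq (θ : ℝ) (h0 : 0 ≤ θ) (hπ : θ ≤ π) :
    1 / ((Real.cos θ - 1 / 2) * Real.sqrt (1 + Real.cos θ)) +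
      1 / ((Real.cos θ + 1 / 2) * Real.sqrt (1 - Real.cos θ))
      = Real.sqrt 2 * (1 / Real.cos (3 * (θ / 2))) +
        Real.sqrt 2 * (1 / Real.sin (3 * (θ / 2))) := by
  rw [denom_cos θ h0 hπ, denom_sin θ h0 hπ, inv_half_sqrt_two_mul, inv_half_sqrt_two_mul]

lemma g_abs_eq (θ : ℝ) (h0 : 0 ≤ θ) (hπ : θ ≤ π) :
    1 / (|Real.cos θ - 1 / 2| * Real.sqrt (1 + Real.cos θ)) +
      1 / (|Real.cos θ + 1 / 2| * Real.sqrt (1 - Real.cos θ))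
      = Real.sqrt 2 * (1 / |Real.cos (3 * (θ / 2))|) +
        Real.sqrt 2 * (1 / |Real.sin (3 * (θ / 2))|) := by
  have h1 : |Real.cos θ - 1 / 2| * Real.sqrt (1 + Real.cos θ)
      = Real.sqrt 2 / 2 * |Real.cos (3 * (θ / 2))| := by
    rw [← abs_of_nonneg (Real.sqrt_nonneg (1 + Real.cos θ)), ← abs_mul, denom_cos θ h0 hπ,
      abs_mul, abs_of_nonneg (by positivity : (0:ℝ) ≤ Real.sqrt 2 / 2)]
  have h2 : |Real.cos θ + 1 / 2| * Real.sqrt (1 - Real.cos θ)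
      = Real.sqrt 2 / 2 * |Real.sin (3 * (θ / 2))| := by
    rw [← abs_of_nonneg (Real.sqrt_nonneg (1 - Real.cos θ)), ← abs_mul, denom_sin θ h0 hπ,
      abs_mul, abs_of_nonneg (by positivity : (0:ℝ) ≤ Real.sqrt 2 / 2)]
  rw [h1, h2, inv_half_sqrt_two_mul, inv_half_sqrt_two_mul]

theorem w_cos_three_theta (θ : ℝ) (hθ : θ ∈ Set.Ioo 0 π) (h1 : θ ≠ π / 3) (h2 : θ ≠ 2 * π / 3) :
    w (Real.cos (3 * θ)) =
      1 / (|Real.cos θ - 1 / 2| * Real.sqrt (1 + Real.cos θ)) +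
      1 / (|Real.cos θ + 1 / 2| * Real.sqrt (1 - Real.cos θ)) := by
  obtain ⟨hθ0, hθπ⟩ := hθ
  have hπ := Real.pi_pos
  rw [g_abs_eq θ hθ0.le hθπ.le]
  unfold w
  rcases lt_or_gt_of_ne h1 with hc1 | hc1
  · -- θ ∈ (0, π/3)
    have ha : Real.arccos (Real.cos (3 * θ)) = 3 * θ :=
      Real.arccos_cos (by linarith) (by linarith)
    rw [ha, show 3 * θ / 3 = θ by ring, g_eq θ hθ0.le hθπ.le]
    have hcpos : 0 < Real.cos (3 * (θ / 2)) :=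
      Real.cos_pos_of_mem_Ioo ⟨by linarith, by linarith⟩
    have hspos : 0 < Real.sin (3 * (θ / 2)) :=
      Real.sin_pos_of_pos_of_lt_pi (by linarith) (by linarith)
    rw [abs_of_pos hcpos, abs_of_pos hspos]
  rcases lt_or_gt_of_ne h2 with hc2 | hc2
  · -- θ ∈ (π/3, 2π/3)
    have hcc : Real.cos (3 * θ) = Real.cos (2 * π - 3 * θ) := (Real.cos_two_pi_sub _).symm
    have ha : Real.arccos (Real.cos (3 * θ)) = 2 * π - 3 * θ := by
      rw [hcc]; exact Real.arccos_cos (by linarith) (by linarith)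
    have hφ0 : (0:ℝ) ≤ (2 * π - 3 * θ) / 3 := by linarith
    have hφπ : (2 * π - 3 * θ) / 3 ≤ π := by linarith
    rw [ha, g_eq _ hφ0 hφπ]
    have e1 : 3 * ((2 * π - 3 * θ) / 3 / 2) = π - 3 * (θ / 2) := by ring
    have hcneg : Real.cos (3 * (θ / 2)) < 0 := by
      apply Real.cos_neg_of_pi_div_two_lt_of_lt <;> [linarith; linarith]
    have hspos : 0 < Real.sin (3 * (θ / 2)) :=
      Real.sin_pos_of_pos_of_lt_pi (by linarith) (by linarith)
    rw [e1, Real.cos_pi_sub, Real.sin_pi_sub, abs_of_neg hcneg, abs_of_pos hspos]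
  · -- θ ∈ (2π/3, π)
    have hcc : Real.cos (3 * θ) = Real.cos (3 * θ - 2 * π) := by
      rw [Real.cos_sub_two_pi]
    have ha : Real.arccos (Real.cos (3 * θ)) = 3 * θ - 2 * π := by
      rw [hcc]; exact Real.arccos_cos (by linarith) (by linarith)
    have hφ0 : (0:ℝ) ≤ (3 * θ - 2 * π) / 3 := by linarith
    have hφπ : (3 * θ - 2 * π) / 3 ≤ π := by linarith
    rw [ha, g_eq _ hφ0 hφπ]
    have e1 : 3 * ((3 * θ - 2 * π) / 3 / 2) = 3 * (θ / 2) - π := by ring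
    have hcneg : Real.cos (3 * (θ / 2)) < 0 := by
      apply Real.cos_neg_of_pi_div_two_lt_of_lt <;> [linarith; linarith]
    have hsneg : Real.sin (3 * (θ / 2)) < 0 := by
      have := Real.sin_neg_of_neg_of_neg_pi_lt (x := 3 * (θ / 2) - 2 * π)
        (by linarith) (by linarith)
      rwa [Real.sin_sub_two_pi] at this
    rw [e1, Real.cos_sub_pi, Real.sin_sub_pi, abs_of_neg hcneg, abs_of_neg hsneg]
end

section
/- Let γ₀ := 0 and (γₙ)_{n≥1} be nonzero complex numbers with γ_{3n} + γ_{3n+1} = 1/2 and γ_{3n+2} = 1/4 for all n ≥ 0. Define monic polynomials by P₀ = 1, P₁(x) = x, P_{n+1}(x) = x·Pₙ(x) − γₙ·P_{n-1}(x), and Q₀ = 1, Q₁(x) = x, Q_{n+1}(x) = x·Qₙ(x) − (1/4)γ_{3n-2}γ_{3n}·Q_{n-1}(x). Then for all n ≥ 0: P_{3n}(x) = Qₙ(T̂₃(x)), where T̂₃(x) = x³ − (3/4)x. -/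
theorem P_three_n (γ : ℕ → ℂ) (P Q : ℕ → ℂ → ℂ)
    (hγ0 : γ 0 = 0) (hγne : ∀ n : ℕ, 1 ≤ n → γ n ≠ 0)
    (hsum : ∀ n : ℕ, γ (3 * n) + γ (3 * n + 1) = 1 / 2)
    (hγ2 : ∀ n : ℕ, γ (3 * n + 2) = 1 / 4)
    (hP0 : ∀ x, P 0 x = 1) (hP1 : ∀ x, P 1 x = x)
    (hPrec : ∀ n : ℕ, ∀ x, P (n + 2) x = x * P (n + 1) x - γ (n + 1) * P n x)
    (hQ0 : ∀ x, Q 0 x = 1) (hQ1 : ∀ x, Q 1 x = x)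
    (hQrec : ∀ n : ℕ, ∀ x,
      Q (n + 2) x = x * Q (n + 1) x - (1 / 4) * γ (3 * n + 1) * γ (3 * n + 3) * Q n x) :
    ∀ n : ℕ, ∀ x : ℂ, P (3 * n) x = Q n (x ^ 3 - (3 / 4) * x) := by
  -- auxiliary identity
  have aux : ∀ n : ℕ, ∀ x : ℂ,
      x * P (3 * n + 3) x - (x ^ 2 - 1 / 4) * P (3 * n + 2) x
        = -(1 / 4) * γ (3 * n + 1) * P (3 * n) x := by
    intro n x
    have h1 : P (3 * n + 2) x = x * P (3 * n + 1) x - γ (3 * n + 1) * P (3 * n) x :=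
      hPrec (3 * n) x
    have h2 : P (3 * n + 3) x = x * P (3 * n + 2) x - γ (3 * n + 2) * P (3 * n + 1) x :=
      hPrec (3 * n + 1) x
    rw [hγ2 n] at h2
    linear_combination x * h2 + (1 / 4 : ℂ) * h1
  have γ1 : γ 1 = 1 / 2 := by
    have := hsum 0
    simpa [hγ0] using this
  have key : ∀ n : ℕ, (∀ x : ℂ, P (3 * n) x = Q n (x ^ 3 - (3 / 4) * x)) ∧
      (∀ x : ℂ, P (3 * (n + 1)) x = Q (n + 1) (x ^ 3 - (3 / 4) * x)) := by
    intro n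
    induction n with
    | zero =>
      constructor
      · intro x; rw [show (3 * 0 : ℕ) = 0 from rfl, hP0, hQ0]
      · intro x
        have h2 : P 2 x = x * P 1 x - γ 1 * P 0 x := hPrec 0 x
        have h3 : P 3 x = x * P 2 x - γ 2 * P 1 x := hPrec 1 x
        have g2 : γ 2 = 1 / 4 := hγ2 0
        show P 3 x = Q 1 (x ^ 3 - (3 / 4) * x)
        rw [h3, h2, hP0, hP1, hQ1, g2, γ1]
        ring
    | succ n ih =>
      refine ⟨ih.2, ?_⟩
      intro x
      have hA : P (3 * n + 4) x = x * P (3 * n + 3) x - γ (3 * n + 3) * P (3 * n + 2) x :=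
        hPrec (3 * n + 2) x
      have hB : P (3 * n + 5) x = x * P (3 * n + 4) x - γ (3 * n + 4) * P (3 * n + 3) x :=
        hPrec (3 * n + 3) x
      have hC : P (3 * n + 6) x = x * P (3 * n + 5) x - γ (3 * n + 5) * P (3 * n + 4) x :=
        hPrec (3 * n + 4) x
      have h5 : γ (3 * n + 5) = 1 / 4 := hγ2 (n + 1)
      rw [h5] at hC
      have hs : γ (3 * n + 3) + γ (3 * n + 4) = 1 / 2 := hsum (n + 1)
      have haux := aux n x
      have hQ : Q (n + 2) (x ^ 3 - (3 / 4) * x)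
          = (x ^ 3 - (3 / 4) * x) * Q (n + 1) (x ^ 3 - (3 / 4) * x)
            - (1 / 4) * γ (3 * n + 1) * γ (3 * n + 3) * Q n (x ^ 3 - (3 / 4) * x) :=
        hQrec n (x ^ 3 - (3 / 4) * x)
      have ihA : P (3 * n) x = Q n (x ^ 3 - (3 / 4) * x) := ih.1 x
      have ihB : P (3 * n + 3) x = Q (n + 1) (x ^ 3 - (3 / 4) * x) := ih.2 x
      show P (3 * n + 6) x = Q (n + 2) (x ^ 3 - (3 / 4) * x)
      linear_combination hC + x * hB + (x ^ 2 - 1 / 4) * hA + γ (3 * n + 3) * haux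
        - (x * P (3 * n + 3) x) * hs - hQ + (x ^ 3 - (3 / 4) * x) * ihB
        - (1 / 4) * γ (3 * n + 1) * γ (3 * n + 3) * ihA
  exact fun n => (key n).1
end

section
/- Under the same hypotheses, for all n ≥ 0: Û₂(x)·P_{3n+1}(x) = Q_{n+1}(T̂₃(x)) + γ_{3n+1}·x·Qₙ(T̂₃(x)), where Û₂(x) = x² − 1/4 and T̂₃(x) = x³ − (3/4)x. -/
theorem P_three_n_one (γ : ℕ → ℂ) (P Q : ℕ → ℂ → ℂ)
    (hγ0 : γ 0 = 0) (hγne : ∀ n : ℕ, 1 ≤ n → γ n ≠ 0)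
    (hsum : ∀ n : ℕ, γ (3 * n) + γ (3 * n + 1) = 1 / 2)
    (hγ2 : ∀ n : ℕ, γ (3 * n + 2) = 1 / 4)
    (hP0 : ∀ x, P 0 x = 1) (hP1 : ∀ x, P 1 x = x)
    (hPrec : ∀ n : ℕ, ∀ x, P (n + 2) x = x * P (n + 1) x - γ (n + 1) * P n x)
    (hQ0 : ∀ x, Q 0 x = 1) (hQ1 : ∀ x, Q 1 x = x)
    (hQrec : ∀ n : ℕ, ∀ x,
      Q (n + 2) x = x * Q (n + 1) x - (1 / 4) * γ (3 * n + 1) * γ (3 * n + 3) * Q n x) :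
    ∀ n : ℕ, ∀ x : ℂ, (x ^ 2 - 1 / 4) * P (3 * n + 1) x =
      Q (n + 1) (x ^ 3 - (3 / 4) * x) + γ (3 * n + 1) * x * Q n (x ^ 3 - (3 / 4) * x) := by
  have key : ∀ n : ℕ,
      (∀ x : ℂ, (x ^ 2 - 1 / 4) * P (3 * n + 1) x =
        Q (n + 1) (x ^ 3 - (3 / 4) * x) + γ (3 * n + 1) * x * Q n (x ^ 3 - (3 / 4) * x)) ∧
      (∀ x : ℂ, (x ^ 2 - 1 / 4) * P (3 * n) x =
        (x ^ 2 - 1 / 4) * Q n (x ^ 3 - (3 / 4) * x)) := by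
    intro n
    induction n with
    | zero =>
      have hγ1 : γ 1 = 1 / 2 := by
        have h := hsum 0
        rw [show 3 * 0 = 0 from rfl, show 3 * 0 + 1 = 1 from rfl, hγ0] at h
        linear_combination h
      constructor
      · intro x
        rw [show 3 * 0 + 1 = 1 from rfl, hP1, hQ1, hQ0, hγ1]
        ring
      · intro x
        rw [show 3 * 0 = 0 from rfl, hP0, hQ0]
    | succ n ih =>
      obtain ⟨hA, hC⟩ := ih
      have hg2 : γ (3 * n + 2) = 1 / 4 := hγ2 n
      have hg4 : γ (3 * n + 4) = 1 / 2 - γ (3 * n + 3) := by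
        have h := hsum (n + 1)
        rw [show 3 * (n + 1) = 3 * n + 3 from by ring,
          show 3 * n + 3 + 1 = 3 * n + 4 from by ring] at h
        linear_combination h
      constructor
      · intro x
        have e2 := hPrec (3 * n) x
        have e3 := hPrec (3 * n + 1) x
        have e4 := hPrec (3 * n + 2) x
        have e5 := hQrec n (x ^ 3 - (3 / 4) * x)
        rw [show 3 * n + 2 = 3 * n + 1 + 1 from by ring] at e3
        rw [show 3 * n + 2 + 2 = 3 * n + 4 from by ring,
          show 3 * n + 2 + 1 = 3 * n + 1 + 2 from by ring] at e4
        rw [show 3 * (n + 1) + 1 = 3 * n + 4 from by ring, e4, e3, e2,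
          show n + 1 + 1 = n + 2 from rfl, e5, hg2, hg4,
          show 3 * n + 1 + 2 = 3 * n + 3 from by ring]
        linear_combination (x ^ 3 - γ (3 * n + 3) * x - x / 4) * hA x -
          γ (3 * n + 1) * (x ^ 2 - γ (3 * n + 3)) * hC x
      · intro x
        have e2 := hPrec (3 * n) x
        have e3 := hPrec (3 * n + 1) x
        rw [show 3 * n + 2 = 3 * n + 1 + 1 from by ring] at e3
        rw [show 3 * (n + 1) = 3 * n + 1 + 2 from by ring, e3, e2, hg2]
        linear_combination (x ^ 2 - 1 / 4) * hA x - γ (3 * n + 1) * x * hC x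
  intro n x
  exact (key n).1 x
end

section
/- Under the same hypotheses, for all n ≥ 0: Û₂(x)·P_{3n+2}(x) = x·Q_{n+1}(T̂₃(x)) + (1/4)γ_{3n+1}·Qₙ(T̂₃(x)), where Û₂(x) = x² − 1/4 and T̂₃(x) = x³ − (3/4)x. -/
theorem P_three_n_two (γ : ℕ → ℂ) (P Q : ℕ → ℂ → ℂ)
    (hγ0 : γ 0 = 0) (hγne : ∀ n : ℕ, 1 ≤ n → γ n ≠ 0)
    (hsum : ∀ n : ℕ, γ (3 * n) + γ (3 * n + 1) = 1 / 2)
    (hγ2 : ∀ n : ℕ, γ (3 * n + 2) = 1 / 4)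
    (hP0 : ∀ x, P 0 x = 1) (hP1 : ∀ x, P 1 x = x)
    (hPrec : ∀ n : ℕ, ∀ x, P (n + 2) x = x * P (n + 1) x - γ (n + 1) * P n x)
    (hQ0 : ∀ x, Q 0 x = 1) (hQ1 : ∀ x, Q 1 x = x)
    (hQrec : ∀ n : ℕ, ∀ x,
      Q (n + 2) x = x * Q (n + 1) x - (1 / 4) * γ (3 * n + 1) * γ (3 * n + 3) * Q n x) :
    ∀ n : ℕ, ∀ x : ℂ, (x ^ 2 - 1 / 4) * P (3 * n + 2) x =
      x * Q (n + 1) (x ^ 3 - (3 / 4) * x) + (1 / 4) * γ (3 * n + 1) * Q n (x ^ 3 - (3 / 4) * x) := by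
  have hγ1 : γ 1 = 1 / 2 := by
    have := hsum 0
    simpa [hγ0] using this
  have key : ∀ n : ℕ, ∀ x : ℂ,
      ((x ^ 2 - 1 / 4) * P (3 * n + 2) x =
        x * Q (n + 1) (x ^ 3 - (3 / 4) * x) + (1 / 4) * γ (3 * n + 1) * Q n (x ^ 3 - (3 / 4) * x)) ∧
      ((x ^ 2 - 1 / 4) * P (3 * n + 1) x =
        Q (n + 1) (x ^ 3 - (3 / 4) * x) + γ (3 * n + 1) * x * Q n (x ^ 3 - (3 / 4) * x)) := by
    intro n
    induction n with
    | zero =>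
      intro x
      have hP2 : P 2 x = x * P 1 x - γ 1 * P 0 x := hPrec 0 x
      constructor
      · rw [hP2, hP0, hP1, hQ1, hQ0, hγ1]
        ring
      · rw [hP1, hQ1, hQ0, hγ1]
        ring
    | succ n ih =>
      intro x
      set y : ℂ := x ^ 3 - (3 / 4) * x with hy
      obtain ⟨ihA, ihB⟩ := ih x
      have h3 : P (3 * n + 3) x = x * P (3 * n + 2) x - (1 / 4) * P (3 * n + 1) x := by
        have := hPrec (3 * n + 1) x
        rw [hγ2 n] at this
        convert this using 3 <;> ring
      have h4 : P (3 * n + 4) x = x * P (3 * n + 3) x - γ (3 * n + 3) * P (3 * n + 2) x := by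
        have := hPrec (3 * n + 2) x
        convert this using 3 <;> ring
      have h5 : P (3 * n + 5) x = x * P (3 * n + 4) x - γ (3 * n + 4) * P (3 * n + 3) x := by
        have := hPrec (3 * n + 3) x
        convert this using 3 <;> ring
      have hQ2 : Q (n + 2) y = y * Q (n + 1) y - (1 / 4) * γ (3 * n + 1) * γ (3 * n + 3) * Q n y :=
        hQrec n y
      have hs : γ (3 * n + 3) + γ (3 * n + 4) = 1 / 2 := by
        have := hsum (n + 1)
        convert this using 3 <;> ring
      have e1 : 3 * (n + 1) + 2 = 3 * n + 5 := by ring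
      have e2 : 3 * (n + 1) + 1 = 3 * n + 4 := by ring
      rw [e1, e2]
      have hB : (x ^ 2 - 1 / 4) * P (3 * n + 4) x =
          Q (n + 2) y + γ (3 * n + 4) * x * Q (n + 1) y := by
        rw [h4, h3, hQ2]
        have hg3 : γ (3 * n + 3) = 1 / 2 - γ (3 * n + 4) := by linear_combination hs
        rw [hg3, hy]
        linear_combination (x ^ 2 - 1 / 2 + γ (3 * n + 4)) * ihA - (x / 4) * ihB
      refine ⟨?_, hB⟩
      rw [h5, h3]
      linear_combination x * hB - γ (3 * n + 4) * x * ihA + (γ (3 * n + 4) / 4) * ihB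
  intro n x
  exact (key n x).1
end
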